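/- For the seed with one mutable vertex 1 and one highly frozen vertex 2 joined by an arrow 1 → 2, and cluster (x₁, x₂): the complement of the image of the gluing of T(0) = (𝔸¹\{0}) × 𝔸¹ and T(1) = (𝔸¹\{0}) × 𝔸¹ (glued along {x₂ ≠ −1} by (x₁,x₂) ↦ ((1+x₂)/x₁, x₂)) embeds as an open subscheme of 𝔸² via (x₁,x₂) ↦ (x₁, (1+x₂)/x₁) on T(0) and (y₁,y₂) ↦ ((1+y₂)/y₁, y₁) on T(1), whose image is exactly 𝔸² \ {(0,0)}. -/

import Mathlib

/-- Points of the two charts `T(0)` and `T(1)`, each a copy of `(𝔸¹∖{0}) × 𝔸¹`. -/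
def ClPoint : Type :=
  {p : ℂ × ℂ // p.1 ≠ 0} ⊕ {p : ℂ × ℂ // p.1 ≠ 0}

noncomputable instance : TopologicalSpace ClPoint := by unfold ClPoint; infer_instance

/-- The gluing relation of the type `A₁` seed with one frozen coefficient:
`(x₁,x₂) ∈ T(0)` with `x₂ ≠ −1` is identified with
`((1+x₂)/x₁, x₂) ∈ T(1)`. -/
def clRel : ClPoint → ClPoint → Prop
  | Sum.inl x, Sum.inr y => x.1.2 ≠ -1 ∧ y.1.1 = (1 + x.1.2) / x.1.1 ∧ y.1.2 = x.1.2
  | _, _ => False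

/-- The two chart maps to `𝔸²`: `(x₁,x₂) ↦ (x₁, (1+x₂)/x₁)` on `T(0)` and
`(y₁,y₂) ↦ ((1+y₂)/y₁, y₁)` on `T(1)`. -/
noncomputable def chartMap : ClPoint → ℂ × ℂ
  | Sum.inl x => (x.1.1, (1 + x.1.2) / x.1.1)
  | Sum.inr y => ((1 + y.1.2) / y.1.1, y.1.1)

lemma chartMap_compat : ∀ a b : ClPoint, clRel a b → chartMap a = chartMap b := by
  rintro (x | x) (y | y) h <;> try exact absurd h not_false
  obtain ⟨h1, h2, h3⟩ := h
  have hx : x.1.1 ≠ 0 := x.2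
  have h1' : 1 + x.1.2 ≠ 0 := by
    intro h; apply h1; linear_combination h
  simp only [chartMap, h2, h3, Prod.mk.injEq]
  constructor
  · field_simp
  · trivial

/-- The finite cluster variety `Y` glued from `T(0)` and `T(1)` embeds into `𝔸²`
via the two chart maps, which are compatible with the gluing, and the image is
exactly `𝔸² ∖ {(0,0)}`. -/
noncomputable instance : TopologicalSpace (Quot clRel) := instTopologicalSpaceQuot

theorem finite_cluster_variety_embeds_in_A2_minus_origin :
    (∀ a b : ClPoint, clRel a b → chartMap a = chartMap b) ∧
    ∃ G : Quot clRel → ℂ × ℂ,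
      (∀ a : ClPoint, G (Quot.mk clRel a) = chartMap a) ∧
      Function.Injective G ∧
      Continuous G ∧
      Set.range G = {p : ℂ × ℂ | p ≠ (0, 0)} := by
  refine ⟨chartMap_compat, Quot.lift chartMap chartMap_compat, fun a => rfl, ?_, ?_, ?_⟩
  · -- injectivity
    intro q1 q2
    induction q1 using Quot.ind with | _ a =>
    induction q2 using Quot.ind with | _ b =>
    revert a b
    rintro (x | x) (y | y) h <;> simp only [chartMap, Prod.mk.injEq] at h <;>
      obtain ⟨h1, h2⟩ := h
    · -- inl inl
      have hy : y.1.1 ≠ 0 := y.2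
      rw [h1, div_eq_div_iff hy hy] at h2
      have h3 := mul_right_cancel₀ hy h2
      have : x.1.2 = y.1.2 := by linear_combination h3
      rw [Subtype.ext (Prod.ext h1 this)]
    · -- inl inr
      have hx : x.1.1 ≠ 0 := x.2
      have hy : y.1.1 ≠ 0 := y.2
      have h2' := h2
      rw [div_eq_iff hx] at h2'
      have h1' := h1
      rw [eq_div_iff hy] at h1'
      have hxy : y.1.2 = x.1.2 := by linear_combination - h1' - h2'
      have hne : x.1.2 ≠ -1 := by
        intro hc
        rw [hc] at h2'
        simp only [add_neg_cancel] at h2'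
        exact hy (by
          rcases mul_eq_zero.mp h2'.symm with h | h
          · exact h
          · exact absurd h hx)
      refine Quot.sound ⟨hne, ?_, hxy⟩
      rw [eq_div_iff hx]
      exact h2'.symm
    · -- inr inl
      have hx : x.1.1 ≠ 0 := x.2
      have hy : y.1.1 ≠ 0 := y.2
      have h1' := h1
      rw [div_eq_iff hx] at h1'
      have h2' := h2
      rw [eq_div_iff hy] at h2'
      have hxy : x.1.2 = y.1.2 := by linear_combination h1' + h2'
      have hne : y.1.2 ≠ -1 := by
        intro hc
        rw [hc] at h2'
        simp only [add_neg_cancel] at h2'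
        exact hx (by
          rcases mul_eq_zero.mp h2' with h | h
          · exact h
          · exact absurd h hy)
      exact (Quot.sound ⟨hne, h2, hxy⟩).symm
    · -- inr inr
      have hy : y.1.1 ≠ 0 := y.2
      rw [h2, div_eq_div_iff hy hy] at h1
      have h3 := mul_right_cancel₀ hy h1
      have : x.1.2 = y.1.2 := by linear_combination h3
      rw [Subtype.ext (Prod.ext h2 this)]
  · -- continuity
    rw [continuous_coinduced_dom]
    apply continuous_sum_dom.mpr
    constructor
    · show Continuous fun x : {p : ℂ × ℂ // p.1 ≠ 0} => ((x.1.1, (1 + x.1.2) / x.1.1) : ℂ × ℂ)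
      refine Continuous.prodMk (by fun_prop) ?_
      exact Continuous.div (by fun_prop) (by fun_prop) (fun x => x.2)
    · show Continuous fun y : {p : ℂ × ℂ // p.1 ≠ 0} => (((1 + y.1.2) / y.1.1, y.1.1) : ℂ × ℂ)
      refine Continuous.prodMk ?_ (by fun_prop)
      exact Continuous.div (by fun_prop) (by fun_prop) (fun x => x.2)
  · -- range
    ext ⟨p, q⟩
    simp only [Set.mem_range, Set.mem_setOf_eq]
    constructor
    · rintro ⟨r, hr⟩
      revert hr
      refine Quot.inductionOn r ?_
      rintro (x | x) hr <;> simp only [chartMap, Prod.mk.injEq] at hr <;>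
        obtain ⟨h1, h2⟩ := hr <;> intro h <;>
        rw [Prod.mk.injEq] at h
      · exact x.2 (h1 ▸ h.1)
      · exact x.2 (h2 ▸ h.2)
    · intro h
      rw [ne_eq, Prod.mk.injEq, not_and_or] at h
      rcases h with h | h
      · exact ⟨Quot.mk _ (Sum.inl ⟨(p, p * q - 1), h⟩), by
          simp only [chartMap, Prod.mk.injEq]
          refine ⟨trivial, ?_⟩
          rw [div_eq_iff h]; ring⟩
      · exact ⟨Quot.mk _ (Sum.inr ⟨(q, p * q - 1), h⟩), by
          simp only [chartMap, Prod.mk.injEq]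
          refine ⟨?_, trivial⟩
          rw [div_eq_iff h]; ring⟩
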